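/- Let h > 0, let u⁰ : ℤ → ℝ³ satisfy |u⁰(i)| = 1 for all i and D⁺u⁰ ∈ L²_h, and let g ∈ W^{1,∞}(ℝ₊, L^∞(ℝ)) satisfy α ≤ g ≤ β with ‖∂_t g‖_{L^∞} ≤ β₁, for constants α > 0, β, β₁; set g_h(t,i) = g(t, ih). Then any C¹ solution u of the semi-discrete system du/dt(t,i) = u(t,i) ∧ D⁺(g_h(t,·) D⁻u(t,·))(i) with u(0) = u⁰, |u(t,i)| = 1 and D⁺u(t) ∈ L²_h satisfies, for all t ≥ 0, |D⁺u(t)|_h ≤ √(β/α) |D⁺u⁰|_h exp(β₁ t/(2α)). -/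

import Mathlib

open MeasureTheory Set Filter Topology

noncomputable section

abbrev E3 : Type := EuclideanSpace ℝ (Fin 3)

def dotE (a b : E3) : ℝ := inner ℝ a b

/-- Forward difference operator `D⁺v(i) = (v(i+1) − v(i))/h`. -/
def Dp (h : ℝ) (v : ℤ → E3) (i : ℤ) : E3 := h⁻¹ • (v (i + 1) - v i)

/-- Backward difference operator `D⁻v(i) = (v(i) − v(i−1))/h`. -/
def Dm (h : ℝ) (v : ℤ → E3) (i : ℤ) : E3 := h⁻¹ • (v i - v (i - 1))

/-- Discrete `L²ₕ` norm: `|v|ₕ = (h ∑ᵢ |v(i)|²)^{1/2}`. -/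
def normh (h : ℝ) (v : ℤ → E3) : ℝ := Real.sqrt (h * ∑' i : ℤ, ‖v i‖ ^ 2)

/-- Piecewise affine interpolation of a grid function on the grid `xᵢ = i h`. -/
def Ph (h : ℝ) (v : ℤ → E3) (x : ℝ) : E3 :=
  v ⌊x / h⌋ + (x - (⌊x / h⌋ : ℤ) * h) • Dp h v ⌊x / h⌋

/-- Piecewise constant interpolation of a grid function on the grid `xᵢ = i h`. -/
def Qh (h : ℝ) (v : ℤ → E3) (x : ℝ) : E3 := v ⌊x / h⌋

def cross (a b : E3) : E3 :=
  (WithLp.equiv 2 (Fin 3 → ℝ)).symm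
    (crossProduct ((WithLp.equiv 2 (Fin 3 → ℝ)) a) ((WithLp.equiv 2 (Fin 3 → ℝ)) b))

/-- Right-hand side of the semi-discrete system:
`u(i) ∧ D⁺(g_h(t,·) D⁻ w)(i)` with `g_h(t,j) = g(t, j h)`. -/
def rhsD (g : ℝ → ℝ → ℝ) (h : ℝ) (w : ℤ → E3) (t : ℝ) (i : ℤ) : E3 :=
  cross (w i) (Dp h (fun j : ℤ => g t ((j : ℝ) * h) • Dm h w j) i)

/-! ### Auxiliary lemmas -/

section Aux

lemma sq_norm_eq (x : E3) : ‖x‖^2 = x 0^2 + x 1^2 + x 2^2 := by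
  rw [EuclideanSpace.norm_eq, Real.sq_sqrt (by positivity)]
  simp [Fin.sum_univ_three]

lemma cross_coord (a b : E3) :
    cross a b 0 = a 1 * b 2 - a 2 * b 1 ∧ cross a b 1 = a 2 * b 0 - a 0 * b 2 ∧
    cross a b 2 = a 0 * b 1 - a 1 * b 0 := by
  refine ⟨?_, ?_, ?_⟩ <;>
    simp [cross, crossProduct]

lemma dotE_eq (a b : E3) : dotE a b = a 0 * b 0 + a 1 * b 1 + a 2 * b 2 := by
  simp [dotE, PiLp.inner_apply, Fin.sum_univ_three, RCLike.inner_apply]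
  ring

lemma dotE_cross_right (a b : E3) : dotE b (cross a b) = 0 := by
  obtain ⟨h0, h1, h2⟩ := cross_coord a b
  rw [dotE_eq, h0, h1, h2]; ring

lemma norm_cross_le (a b : E3) : ‖cross a b‖ ≤ ‖a‖ * ‖b‖ := by
  obtain ⟨h0, h1, h2⟩ := cross_coord a b
  have hsq : ‖cross a b‖^2 ≤ (‖a‖ * ‖b‖)^2 := by
    rw [mul_pow, sq_norm_eq, sq_norm_eq, sq_norm_eq, h0, h1, h2]
    nlinarith [sq_nonneg (a 0 * b 0 + a 1 * b 1 + a 2 * b 2)]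
  have h := Real.sqrt_le_sqrt hsq
  rwa [Real.sqrt_sq (norm_nonneg _), Real.sqrt_sq (mul_nonneg (norm_nonneg _) (norm_nonneg _))] at h

lemma finset_subset_Icc (s : Finset ℤ) : ∃ N : ℕ, s ⊆ Finset.Icc (-(N:ℤ)) N := by
  set N : ℕ := Finset.sup s Int.natAbs with hN
  refine ⟨N, fun i hi => ?_⟩
  have := Finset.le_sup (f := Int.natAbs) hi
  have h2 : (i.natAbs : ℤ) ≤ (N : ℤ) := by exact_mod_cast this
  simp only [Finset.mem_Icc]
  omega

lemma tendsto_Icc_atTop : Tendsto (fun N : ℕ => Finset.Icc (-(N:ℤ)) N) atTop atTop := by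
  apply tendsto_atTop_finset_of_monotone
  · intro m n hmn
    apply Finset.Icc_subset_Icc <;> [skip; skip] <;> exact_mod_cast by omega
  · intro i
    exact ⟨i.natAbs, by simp only [Finset.mem_Icc]; omega⟩

lemma tendsto_partial_sums {f : ℤ → ℝ} (hf : Summable f) :
    Tendsto (fun N : ℕ => ∑ i ∈ Finset.Icc (-(N:ℤ)) N, f i) atTop (𝓝 (∑' i, f i)) :=
  hf.hasSum.comp tendsto_Icc_atTop

lemma summable_shift {f : ℤ → ℝ} (hf : Summable f) (c : ℤ) : Summable (fun i => f (i + c)) :=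
  (Equiv.addRight c).summable_iff.mpr hf

lemma tsum_shift (f : ℤ → ℝ) (c : ℤ) : (∑' i, f (i + c)) = ∑' i, f i :=
  (Equiv.addRight c).tsum_eq f

lemma gronwallBound_mono' {δ K ε : ℝ} (hδ : 0 ≤ δ) (hK : 0 < K) (hε : 0 ≤ ε) {x y : ℝ}
    (hxy : x ≤ y) : gronwallBound δ K ε x ≤ gronwallBound δ K ε y := by
  rw [gronwallBound_of_K_ne_0 hK.ne']
  have h1 : Real.exp (K * x) ≤ Real.exp (K * y) := Real.exp_le_exp.2 (by nlinarith)
  have h2 : (0:ℝ) ≤ ε / K := div_nonneg hε hK.le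
  nlinarith

lemma summable_of_abs {f : ℤ → ℝ} (hf : Summable fun i => |f i|) : Summable f :=
  Summable.of_norm (by simpa [Real.norm_eq_abs] using hf)

lemma abs_tsum_le {f : ℤ → ℝ} (hf : Summable fun i => |f i|) : |∑' i, f i| ≤ ∑' i, |f i| := by
  simpa [Real.norm_eq_abs] using
    norm_tsum_le_tsum_norm (f := f) (by simpa [Real.norm_eq_abs] using hf)

lemma slope_freq {f : ℝ → ℝ} {d x : ℝ} (hx : 0 ≤ x)
    (hf : HasDerivWithinAt f d (Ici 0) x) {r : ℝ} (hr : d < r) :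
    ∃ᶠ z in 𝓝[>] x, (z - x)⁻¹ * (f z - f x) < r := by
  have h1 : Tendsto (slope f x) (𝓝[(Ici 0) \ {x}] x) (𝓝 d) :=
    hasDerivWithinAt_iff_tendsto_slope.mp hf
  have h2 : 𝓝[>] x ≤ 𝓝[(Ici 0) \ {x}] x :=
    nhdsWithin_mono x (fun z hz => ⟨hx.trans (le_of_lt hz), hz.ne'⟩)
  have h3 : Tendsto (slope f x) (𝓝[>] x) (𝓝 d) := h1.mono_left h2
  have h4 := h3.eventually_lt_const hr
  apply Filter.Eventually.frequently
  filter_upwards [h4] with z hz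
  have : slope f x z = (z - x)⁻¹ * (f z - f x) := by
    rw [slope_def_field]; ring
  rwa [this] at hz

lemma summable_weight {w f : ℤ → ℝ} {β : ℝ} (hf : Summable f) (h0 : ∀ i, 0 ≤ f i)
    (hw : ∀ i, |w i| ≤ β) : Summable fun i => w i * f i := by
  apply summable_of_abs
  apply Summable.of_nonneg_of_le (fun i => abs_nonneg _) (fun i => ?_) (hf.mul_left β)
  rw [abs_mul, abs_of_nonneg (h0 i)]
  exact mul_le_mul_of_nonneg_right (hw i) (h0 i)

lemma finsum_shift {f : ℤ → ℝ} (hf : ∀ i, 0 ≤ f i) {M : ℝ} (hM : ∀ i, f i ≤ M) (N : ℕ) (c : ℤ)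
    (hc : c = 1 ∨ c = -1) :
    ∑ i ∈ Finset.Icc (-(N:ℤ)) N, f (i + c) ≤ (∑ i ∈ Finset.Icc (-(N:ℤ)) N, f i) + 2 * M := by
  have himg : ∑ i ∈ Finset.Icc (-(N:ℤ)) N, f (i + c)
      = ∑ j ∈ (Finset.Icc (-(N:ℤ)) N).image (· + c), f j := by
    rw [Finset.sum_image (by intro a _ b _ hab; simp only at hab; omega)]
  have hsub : (Finset.Icc (-(N:ℤ)) N).image (· + c) ⊆ Finset.Icc (-(N:ℤ) - 1) (N + 1) := by
    intro j hj
    simp only [Finset.mem_image, Finset.mem_Icc] at *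
    obtain ⟨a, ha, rfl⟩ := hj
    rcases hc with rfl | rfl <;> omega
  have hins : Finset.Icc (-(N:ℤ) - 1) ((N:ℤ) + 1)
      = insert (-(N:ℤ) - 1) (insert ((N:ℤ) + 1) (Finset.Icc (-(N:ℤ)) N)) := by
    ext j
    simp only [Finset.mem_Icc, Finset.mem_insert]
    omega
  have h2 : ∑ j ∈ (Finset.Icc (-(N:ℤ)) N).image (· + c), f j
      ≤ ∑ j ∈ Finset.Icc (-(N:ℤ) - 1) ((N:ℤ) + 1), f j :=
    Finset.sum_le_sum_of_subset_of_nonneg hsub (fun i _ _ => hf i)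
  rw [himg]
  refine h2.trans ?_
  rw [hins, Finset.sum_insert (by simp only [Finset.mem_insert, Finset.mem_Icc]; omega),
    Finset.sum_insert (by simp only [Finset.mem_Icc]; omega)]
  have := hM (-(N:ℤ) - 1); have := hM ((N:ℤ) + 1)
  linarith

end Aux

/-! ### The semi-discrete energy framework -/

section Main

variable {g : ℝ → ℝ → ℝ} {h : ℝ} {u : ℝ → ℤ → E3} {α β β₁ : ℝ}

/-- `A(t,i) = ‖D⁺u(t,i)‖²`. -/
def AA (h : ℝ) (u : ℝ → ℤ → E3) (t : ℝ) : ℤ → ℝ := fun i => ‖Dp h (u t) i‖ ^ 2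

/-- time derivative of `D⁺u(·,i)`. -/
def Vd (g : ℝ → ℝ → ℝ) (h : ℝ) (u : ℝ → ℤ → E3) (t : ℝ) (i : ℤ) : E3 :=
  h⁻¹ • (rhsD g h (u t) t (i + 1) - rhsD g h (u t) t i)

/-- time derivative of `A(·,i)`. -/
def DD (g : ℝ → ℝ → ℝ) (h : ℝ) (u : ℝ → ℤ → E3) (t : ℝ) : ℤ → ℝ := fun i =>
  2 * dotE (Dp h (u t) i) (Vd g h u t i)

/-- `S(t) = Σᵢ ‖D⁺u(t,i)‖²`. -/
def SS (h : ℝ) (u : ℝ → ℤ → E3) (t : ℝ) : ℝ := ∑' i, AA h u t i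

/-- weighted energy `F(t) = Σᵢ g(t,(i+1)h) ‖D⁺u(t,i)‖²`. -/
def FF (g : ℝ → ℝ → ℝ) (h : ℝ) (u : ℝ → ℤ → E3) (t : ℝ) : ℝ :=
  ∑' i : ℤ, g t (((i:ℝ) + 1) * h) * AA h u t i

lemma AA_nonneg (t : ℝ) (i : ℤ) : 0 ≤ AA h u t i := sq_nonneg _

lemma SS_nonneg (t : ℝ) : 0 ≤ SS h u t := tsum_nonneg (fun i => AA_nonneg t i)

lemma rhsD_eq (g : ℝ → ℝ → ℝ) (h : ℝ) (w : ℤ → E3) (t : ℝ) (i : ℤ) :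
    rhsD g h w t i = cross (w i)
      (h⁻¹ • (g t (((i : ℝ) + 1) * h) • Dp h w i - g t ((i : ℝ) * h) • Dp h w (i - 1))) := by
  have h1 : Dm h w (i + 1) = Dp h w i := by simp [Dm, Dp]
  have h2 : Dm h w i = Dp h w (i - 1) := by simp [Dm, Dp]
  have h3 : ((i + 1 : ℤ) : ℝ) = (i : ℝ) + 1 := by push_cast; ring
  have h4 : Dp h (fun j : ℤ => g t ((j : ℝ) * h) • Dm h w j) i
      = h⁻¹ • (g t (((i : ℝ) + 1) * h) • Dp h w i - g t ((i : ℝ) * h) • Dp h w (i - 1)) := by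
    show h⁻¹ • ((fun j : ℤ => g t ((j : ℝ) * h) • Dm h w j) (i + 1)
      - (fun j : ℤ => g t ((j : ℝ) * h) • Dm h w j) i) = _
    simp only
    rw [h1, h2, h3]
  unfold rhsD
  rw [h4]

lemma hasDeriv_V
    (hode : ∀ t ∈ Ici (0:ℝ), ∀ i,
      HasDerivWithinAt (fun s => u s i) (rhsD g h (u t) t i) (Ici 0) t)
    {t : ℝ} (ht : t ∈ Ici (0:ℝ)) (i : ℤ) :
    HasDerivWithinAt (fun s => Dp h (u s) i) (Vd g h u t i) (Ici 0) t := by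
  have h1 := ((hode t ht (i+1)).sub (hode t ht i)).const_smul (h⁻¹)
  exact h1

lemma hasDeriv_A
    (hode : ∀ t ∈ Ici (0:ℝ), ∀ i,
      HasDerivWithinAt (fun s => u s i) (rhsD g h (u t) t i) (Ici 0) t)
    {t : ℝ} (ht : t ∈ Ici (0:ℝ)) (i : ℤ) :
    HasDerivWithinAt (fun s => AA h u s i) (DD g h u t i) (Ici 0) t := by
  have hV := hasDeriv_V hode ht i
  have h2 := hV.inner ℝ hV
  have h3 : (fun s => (inner ℝ (Dp h (u s) i) (Dp h (u s) i) : ℝ)) = fun s => AA h u s i := by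
    funext s; rw [real_inner_self_eq_norm_sq]; rfl
  rw [h3] at h2
  refine h2.congr_deriv ?_
  symm
  show 2 * dotE (Dp h (u t) i) (Vd g h u t i) = _
  unfold dotE
  rw [two_mul]
  congr 1
  exact real_inner_comm _ _

lemma contOn_V
    (hode : ∀ t ∈ Ici (0:ℝ), ∀ i,
      HasDerivWithinAt (fun s => u s i) (rhsD g h (u t) t i) (Ici 0) t) (i : ℤ) :
    ContinuousOn (fun s => Dp h (u s) i) (Ici 0) :=
  fun x hx => (hasDeriv_V hode hx i).continuousWithinAt

lemma contOn_Vd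
    (hcont : ∀ i, ContinuousOn (fun t => rhsD g h (u t) t i) (Ici 0)) (i : ℤ) :
    ContinuousOn (fun t => Vd g h u t i) (Ici 0) := by
  unfold Vd
  exact ((hcont (i+1)).sub (hcont i)).const_smul (h⁻¹ : ℝ)

lemma contOn_DD
    (hode : ∀ t ∈ Ici (0:ℝ), ∀ i,
      HasDerivWithinAt (fun s => u s i) (rhsD g h (u t) t i) (Ici 0) t)
    (hcont : ∀ i, ContinuousOn (fun t => rhsD g h (u t) t i) (Ici 0)) (i : ℤ) :
    ContinuousOn (fun t => DD g h u t i) (Ici 0) := by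
  unfold DD dotE
  exact continuousOn_const.mul (ContinuousOn.inner (contOn_V hode i) (contOn_Vd hcont i))

lemma normV_le (hh : 0 < h) {t : ℝ} (hn : ∀ i, ‖u t i‖ = 1) (i : ℤ) :
    ‖Dp h (u t) i‖ ≤ 2 / h := by
  have hd : Dp h (u t) i = h⁻¹ • (u t (i+1) - u t i) := rfl
  rw [hd, norm_smul, norm_inv, Real.norm_eq_abs, abs_of_pos hh]
  have h1 := norm_sub_le (u t (i+1)) (u t i)
  rw [hn, hn] at h1
  rw [div_eq_inv_mul]
  exact mul_le_mul_of_nonneg_left (by linarith) (inv_nonneg.2 hh.le)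

lemma AA_le (hh : 0 < h) {t : ℝ} (hn : ∀ i, ‖u t i‖ = 1) (i : ℤ) :
    AA h u t i ≤ 4 / h ^ 2 := by
  have h1 := normV_le hh hn i
  have h2 : (2 / h)^2 = 4 / h^2 := by field_simp; ring
  calc AA h u t i = ‖Dp h (u t) i‖^2 := rfl
    _ ≤ (2/h)^2 := by
        apply pow_le_pow_left₀ (norm_nonneg _) h1
    _ = 4 / h^2 := h2

lemma normR_le (hh : 0 < h) {t : ℝ} (w : ℤ → E3) (hn : ∀ i, ‖w i‖ = 1)
    (hgb : ∀ x, |g t x| ≤ β) (i : ℤ) :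
    ‖rhsD g h w t i‖ ≤ β / h * (‖Dp h w i‖ + ‖Dp h w (i - 1)‖) := by
  rw [rhsD_eq]
  refine le_trans (norm_cross_le _ _) ?_
  rw [hn i, one_mul, norm_smul, norm_inv, Real.norm_eq_abs, abs_of_pos hh]
  refine le_trans (mul_le_mul_of_nonneg_left (norm_sub_le _ _) (inv_nonneg.2 hh.le)) ?_
  rw [norm_smul, norm_smul, Real.norm_eq_abs, Real.norm_eq_abs]
  have h1 := hgb (((i:ℝ)+1)*h)
  have h2 := hgb ((i:ℝ)*h)
  have heq : β / h * (‖Dp h w i‖ + ‖Dp h w (i-1)‖)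
      = h⁻¹ * (β * ‖Dp h w i‖ + β * ‖Dp h w (i-1)‖) := by field_simp
  rw [heq]
  have hg1 : |g t (((i:ℝ)+1)*h)| * ‖Dp h w i‖ ≤ β * ‖Dp h w i‖ :=
    mul_le_mul_of_nonneg_right h1 (norm_nonneg _)
  have hg2 : |g t ((i:ℝ)*h)| * ‖Dp h w (i-1)‖ ≤ β * ‖Dp h w (i-1)‖ :=
    mul_le_mul_of_nonneg_right h2 (norm_nonneg _)
  exact mul_le_mul_of_nonneg_left (by linarith) (inv_nonneg.2 hh.le)

lemma normVd_le (hh : 0 < h) {t : ℝ} (hn : ∀ i, ‖u t i‖ = 1)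
    (hgb : ∀ x, |g t x| ≤ β) (i : ℤ) :
    ‖Vd g h u t i‖ ≤ β / h^2 *
      (‖Dp h (u t) (i-1)‖ + 2 * ‖Dp h (u t) i‖ + ‖Dp h (u t) (i+1)‖) := by
  have hhi : (0:ℝ) ≤ h⁻¹ := (inv_nonneg).2 hh.le
  have h1 := normR_le hh (u t) hn hgb (i+1)
  have h2 := normR_le hh (u t) hn hgb i
  have hsimp : (i+1-1 : ℤ) = i := by ring
  rw [hsimp] at h1
  have h3 : ‖Vd g h u t i‖ ≤ h⁻¹ * (‖rhsD g h (u t) t (i+1)‖ + ‖rhsD g h (u t) t i‖) := by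
    have hd : Vd g h u t i = h⁻¹ • (rhsD g h (u t) t (i+1) - rhsD g h (u t) t i) := rfl
    rw [hd, norm_smul, norm_inv, Real.norm_eq_abs, abs_of_pos hh]
    exact mul_le_mul_of_nonneg_left (norm_sub_le _ _) hhi
  refine h3.trans (le_trans (mul_le_mul_of_nonneg_left (add_le_add h1 h2) hhi) (le_of_eq ?_))
  field_simp
  ring

lemma absDD_le (hh : 0 < h) {t : ℝ} (hn : ∀ i, ‖u t i‖ = 1)
    (hgb : ∀ x, |g t x| ≤ β) (i : ℤ) :
    |DD g h u t i| ≤ β / h^2 * (AA h u t (i-1) + 6 * AA h u t i + AA h u t (i+1)) := by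
  have hβ0 : 0 ≤ β := le_trans (abs_nonneg _) (hgb 0)
  have hq : (0:ℝ) ≤ β / h^2 := div_nonneg hβ0 (pow_pos hh 2).le
  have hV := abs_real_inner_le_norm (Dp h (u t) i) (Vd g h u t i)
  have hVd := normVd_le hh hn hgb i
  have hd : DD g h u t i = 2 * dotE (Dp h (u t) i) (Vd g h u t i) := rfl
  have hA1 : AA h u t (i-1) = ‖Dp h (u t) (i-1)‖^2 := rfl
  have hA2 : AA h u t i = ‖Dp h (u t) i‖^2 := rfl
  have hA3 : AA h u t (i+1) = ‖Dp h (u t) (i+1)‖^2 := rfl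
  rw [hd, hA1, hA2, hA3]
  rw [abs_mul, abs_two]
  set a := ‖Dp h (u t) (i-1)‖ with ha
  set b := ‖Dp h (u t) i‖ with hb
  set cc := ‖Dp h (u t) (i+1)‖ with hcc
  have hb0 : 0 ≤ b := norm_nonneg _
  have hVd' : ‖Vd g h u t i‖ ≤ β/h^2 * (a + 2*b + cc) := hVd
  have hx : |dotE (Dp h (u t) i) (Vd g h u t i)| ≤ b * (β/h^2 * (a + 2*b + cc)) := by
    refine le_trans ?_ (mul_le_mul_of_nonneg_left hVd' hb0)
    exact hV
  nlinarith [mul_nonneg hq (sq_nonneg (a - b)), mul_nonneg hq (sq_nonneg (b - cc)),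
    abs_nonneg (dotE (Dp h (u t) i) (Vd g h u t i))]

lemma summable_AA_sub (t : ℝ) (hA : Summable (AA h u t)) :
    Summable (fun i => AA h u t (i - 1)) := by
  simpa [sub_eq_add_neg] using summable_shift hA (-1)

lemma summable_AA_add (t : ℝ) (hA : Summable (AA h u t)) :
    Summable (fun i => AA h u t (i + 1)) := summable_shift hA 1

/-- majorant of `|DD|`. -/
def mj (h : ℝ) (u : ℝ → ℤ → E3) (β t : ℝ) : ℤ → ℝ := fun i =>
  β / h^2 * (AA h u t (i-1) + 6 * AA h u t i + AA h u t (i+1))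

lemma summable_mj (t : ℝ) (hA : Summable (AA h u t)) : Summable (mj h u β t) :=
  (((summable_AA_sub t hA).add (hA.mul_left 6)).add (summable_AA_add t hA)).mul_left _

lemma summable_absDD (hh : 0 < h) {t : ℝ} (hn : ∀ i, ‖u t i‖ = 1)
    (hgb : ∀ x, |g t x| ≤ β) (hA : Summable (AA h u t)) :
    Summable (fun i => |DD g h u t i|) :=
  Summable.of_nonneg_of_le (fun i => abs_nonneg _) (fun i => absDD_le hh hn hgb i)
    (summable_mj (u := u) t hA)

lemma summable_DD (hh : 0 < h) {t : ℝ} (hn : ∀ i, ‖u t i‖ = 1)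
    (hgb : ∀ x, |g t x| ≤ β) (hA : Summable (AA h u t)) :
    Summable (DD g h u t) := summable_of_abs (summable_absDD hh hn hgb hA)

lemma tsum_absDD_le (hh : 0 < h) {t : ℝ} (hn : ∀ i, ‖u t i‖ = 1)
    (hgb : ∀ x, |g t x| ≤ β) (hA : Summable (AA h u t)) :
    (∑' i, |DD g h u t i|) ≤ (8 * β / h^2) * SS h u t := by
  have h1 : (∑' i, |DD g h u t i|) ≤ ∑' i, mj h u β t i :=
    Summable.tsum_le_tsum (fun i => absDD_le hh hn hgb i) (summable_absDD hh hn hgb hA)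
      (summable_mj (u := u) t hA)
  refine h1.trans (le_of_eq ?_)
  unfold mj
  rw [tsum_mul_left]
  rw [Summable.tsum_add ((summable_AA_sub t hA).add (hA.mul_left 6)) (summable_AA_add t hA),
    Summable.tsum_add (summable_AA_sub t hA) (hA.mul_left 6), tsum_mul_left]
  have e1 : (∑' i, AA h u t (i - 1)) = SS h u t := by
    rw [show (fun i => AA h u t (i-1)) = fun i => AA h u t (i + (-1)) by funext i; ring_nf]
    exact tsum_shift (AA h u t) (-1)
  have e2 : (∑' i, AA h u t (i + 1)) = SS h u t := tsum_shift (AA h u t) 1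
  have e3 : (∑' i, AA h u t i) = SS h u t := rfl
  rw [e1, e2, e3]
  ring

lemma FTC
    (hode : ∀ t ∈ Ici (0:ℝ), ∀ i,
      HasDerivWithinAt (fun s => u s i) (rhsD g h (u t) t i) (Ici 0) t)
    (hcont : ∀ i, ContinuousOn (fun t => rhsD g h (u t) t i) (Ici 0))
    {s t : ℝ} (hs : 0 ≤ s) (hst : s ≤ t) (i : ℤ) :
    (∫ τ in s..t, DD g h u τ i) = AA h u t i - AA h u s i := by
  have hsub : Icc s t ⊆ Ici (0:ℝ) := fun x hx => le_trans hs hx.1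
  apply intervalIntegral.integral_eq_sub_of_hasDeriv_right_of_le hst
  · exact fun x hx => ((hasDeriv_A hode (hsub hx) i).continuousWithinAt).mono hsub
  · intro x hx
    have hx0 : (0:ℝ) ≤ x := le_trans hs hx.1.le
    exact (hasDeriv_A hode hx0 i).mono (fun z hz => le_trans hx0 hz.le)
  · have := (contOn_DD hode hcont i).mono hsub
    rw [← uIcc_of_le hst] at this
    exact this.intervalIntegrable

lemma interchange {A D : ℝ → ℤ → ℝ} {c : ℤ → ℝ} {β s t Cb : ℝ}
    (hst : s ≤ t)
    (hFTC : ∀ i, (∫ τ in s..t, D τ i) = A t i - A s i)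
    (hDcont : ∀ i, ContinuousOn (fun τ => D τ i) (Icc s t))
    (hA0 : ∀ τ i, 0 ≤ A τ i)
    (hAs : Summable (A s)) (hAt : Summable (A t))
    (hDsum : ∀ τ ∈ Icc s t, Summable fun i => |D τ i|)
    (hDb : ∀ τ ∈ Icc s t, (∑' i, |D τ i|) ≤ Cb)
    (hβ : 0 ≤ β)
    (hcb : ∀ i, |c i| ≤ β) :
    ∑' i, c i * (A t i - A s i) = ∫ τ in s..t, ∑' i, c i * D τ i := by
  have hIsub : Set.uIoc s t ⊆ Icc s t := by rw [uIoc_of_le hst]; exact Ioc_subset_Icc_self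
  have hsumL : Summable fun i => c i * (A t i - A s i) := by
    apply summable_of_abs
    apply Summable.of_nonneg_of_le (fun i => abs_nonneg _) (fun i => ?_)
      ((hAt.add hAs).mul_left β)
    rw [abs_mul]
    have h1 : |A t i - A s i| ≤ A t i + A s i := by
      have h2 := abs_add_le (A t i) (-(A s i))
      rw [← sub_eq_add_neg, abs_neg, abs_of_nonneg (hA0 t i), abs_of_nonneg (hA0 s i)] at h2
      exact h2
    exact mul_le_mul (hcb i) h1 (abs_nonneg _) hβ
  have hsumD : ∀ τ ∈ Icc s t, Summable fun i => c i * D τ i := by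
    intro τ hτ
    apply summable_of_abs
    apply Summable.of_nonneg_of_le (fun i => abs_nonneg _) (fun i => ?_) ((hDsum τ hτ).mul_left β)
    rw [abs_mul]
    exact mul_le_mul_of_nonneg_right (hcb i) (abs_nonneg _)
  have hpart : ∀ N : ℕ, (∑ i ∈ Finset.Icc (-(N:ℤ)) N, c i * (A t i - A s i))
      = ∫ τ in s..t, ∑ i ∈ Finset.Icc (-(N:ℤ)) N, c i * D τ i := by
    intro N
    have hint : ∀ i ∈ Finset.Icc (-(N:ℤ)) N,
        IntervalIntegrable (fun τ => c i * D τ i) volume s t := by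
      intro i _
      apply ContinuousOn.intervalIntegrable
      rw [uIcc_of_le hst]
      exact continuousOn_const.mul (hDcont i)
    rw [intervalIntegral.integral_finset_sum hint]
    exact Finset.sum_congr rfl fun i _ => by rw [intervalIntegral.integral_const_mul, hFTC i]
  have hL := tendsto_partial_sums hsumL
  have hR : Tendsto (fun N : ℕ => ∫ τ in s..t, ∑ i ∈ Finset.Icc (-(N:ℤ)) N, c i * D τ i) atTop
      (𝓝 (∫ τ in s..t, ∑' i, c i * D τ i)) := by
    apply intervalIntegral.tendsto_integral_filter_of_dominated_convergence
      (bound := fun _ => β * Cb)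
    · refine Filter.Eventually.of_forall fun N => ?_
      refine ContinuousOn.aestronglyMeasurable ?_ measurableSet_uIoc
      exact (continuousOn_finset_sum _ fun i _ => continuousOn_const.mul (hDcont i)).mono hIsub
    · refine Filter.Eventually.of_forall fun N => (ae_of_all _ fun τ hτ => ?_)
      have hτ' := hIsub hτ
      rw [Real.norm_eq_abs]
      calc |∑ i ∈ Finset.Icc (-(N:ℤ)) N, c i * D τ i|
          ≤ ∑ i ∈ Finset.Icc (-(N:ℤ)) N, |c i * D τ i| := Finset.abs_sum_le_sum_abs _ _
        _ ≤ ∑ i ∈ Finset.Icc (-(N:ℤ)) N, β * |D τ i| :=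
            Finset.sum_le_sum fun i _ => by
              rw [abs_mul]; exact mul_le_mul_of_nonneg_right (hcb i) (abs_nonneg _)
        _ = β * ∑ i ∈ Finset.Icc (-(N:ℤ)) N, |D τ i| := by rw [Finset.mul_sum]
        _ ≤ β * ∑' i, |D τ i| :=
            mul_le_mul_of_nonneg_left
              (Summable.sum_le_tsum _ (fun i _ => abs_nonneg _) (hDsum τ hτ')) hβ
        _ ≤ β * Cb := mul_le_mul_of_nonneg_left (hDb τ hτ') hβ
    · exact intervalIntegrable_const
    · exact ae_of_all _ fun τ hτ => tendsto_partial_sums (hsumD τ (hIsub hτ))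
  simp only [hpart] at hL
  exact tendsto_nhds_unique hL hR

lemma phase1 (hh : 0 < h)
    (hode : ∀ t ∈ Ici (0:ℝ), ∀ i,
      HasDerivWithinAt (fun s => u s i) (rhsD g h (u t) t i) (Ici 0) t)
    (hnorm : ∀ t ∈ Ici (0:ℝ), ∀ i, ‖u t i‖ = 1)
    (hgb : ∀ t x, 0 ≤ t → |g t x| ≤ β)
    (hsum : ∀ t ∈ Ici (0:ℝ), Summable (AA h u t))
    {T : ℝ} (hT : 0 ≤ T) :
    ∀ t ∈ Icc (0:ℝ) T,
      SS h u t ≤ gronwallBound (SS h u 0) (8*β/h^2) (16*β/h^4) t := by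
  have hβ0 : 0 ≤ β := le_trans (abs_nonneg _) (hgb 0 0 le_rfl)
  intro t ht
  have key : ∀ N : ℕ, (∑ i ∈ Finset.Icc (-(N:ℤ)) N, AA h u t i)
      ≤ gronwallBound (SS h u 0) (8*β/h^2) (16*β/h^4) t := by
    intro N
    have hgron := le_gronwallBound_of_liminf_deriv_right_le
      (f := fun x => ∑ i ∈ Finset.Icc (-(N:ℤ)) N, AA h u x i)
      (f' := fun x => ∑ i ∈ Finset.Icc (-(N:ℤ)) N, DD g h u x i)
      (δ := SS h u 0) (K := 8*β/h^2) (ε := 16*β/h^4) (a := 0) (b := T)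
      ?cont ?slope ?init ?bnd
    case cont =>
      intro x hx
      have hx0 : x ∈ Ici (0:ℝ) := hx.1
      exact ((HasDerivWithinAt.fun_sum fun i _ => hasDeriv_A hode hx0 i).continuousWithinAt).mono
        (fun z hz => hz.1)
    case slope =>
      intro x hx r hr
      exact slope_freq hx.1 (HasDerivWithinAt.fun_sum fun i _ => hasDeriv_A hode hx.1 i) hr
    case init =>
      exact Summable.sum_le_tsum _ (fun i _ => AA_nonneg 0 i) (hsum 0 Set.self_mem_Ici)
    case bnd =>
      intro x hx
      have hx0 : (0:ℝ) ≤ x := hx.1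
      have hn := hnorm x hx0
      have hgb' : ∀ y, |g x y| ≤ β := fun y => hgb x y hx0
      have hAle : ∀ i, AA h u x i ≤ 4 / h^2 := fun i => AA_le hh hn i
      have hs1 : (∑ i ∈ Finset.Icc (-(N:ℤ)) N, AA h u x (i + 1))
          ≤ (∑ i ∈ Finset.Icc (-(N:ℤ)) N, AA h u x i) + 2 * (4/h^2) :=
        finsum_shift (AA_nonneg x) hAle N 1 (Or.inl rfl)
      have hs2 : (∑ i ∈ Finset.Icc (-(N:ℤ)) N, AA h u x (i - 1))
          ≤ (∑ i ∈ Finset.Icc (-(N:ℤ)) N, AA h u x i) + 2 * (4/h^2) := by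
        have := finsum_shift (AA_nonneg x) hAle N (-1) (Or.inr rfl)
        simpa [sub_eq_add_neg] using this
      calc (∑ i ∈ Finset.Icc (-(N:ℤ)) N, DD g h u x i)
          ≤ ∑ i ∈ Finset.Icc (-(N:ℤ)) N, |DD g h u x i| :=
            Finset.sum_le_sum fun i _ => le_abs_self _
        _ ≤ ∑ i ∈ Finset.Icc (-(N:ℤ)) N,
              β/h^2 * (AA h u x (i-1) + 6 * AA h u x i + AA h u x (i+1)) :=
            Finset.sum_le_sum fun i _ => absDD_le hh hn hgb' i
        _ = β/h^2 * ((∑ i ∈ Finset.Icc (-(N:ℤ)) N, AA h u x (i-1))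
              + 6 * (∑ i ∈ Finset.Icc (-(N:ℤ)) N, AA h u x i)
              + (∑ i ∈ Finset.Icc (-(N:ℤ)) N, AA h u x (i+1))) := by
            rw [← Finset.mul_sum]
            congr 1
            rw [Finset.sum_add_distrib, Finset.sum_add_distrib, ← Finset.mul_sum]
        _ ≤ β/h^2 * (((∑ i ∈ Finset.Icc (-(N:ℤ)) N, AA h u x i) + 2 * (4/h^2))
              + 6 * (∑ i ∈ Finset.Icc (-(N:ℤ)) N, AA h u x i)
              + ((∑ i ∈ Finset.Icc (-(N:ℤ)) N, AA h u x i) + 2 * (4/h^2))) := by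
            apply mul_le_mul_of_nonneg_left _ (div_nonneg hβ0 (pow_pos hh 2).le)
            linarith
        _ = 8*β/h^2 * (∑ i ∈ Finset.Icc (-(N:ℤ)) N, AA h u x i) + 16*β/h^4 := by
            field_simp
            ring
    have := hgron t ht
    rwa [sub_zero] at this
  refine Summable.tsum_le_of_sum_le (hsum t ht.1) (fun s => ?_)
  obtain ⟨N, hN⟩ := finset_subset_Icc s
  exact le_trans (Finset.sum_le_sum_of_subset_of_nonneg hN (fun i _ _ => AA_nonneg t i)) (key N)

lemma claimA (hh : 0 < h) {τ : ℝ} (hτ : 0 ≤ τ)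
    (hA : Summable (AA h u τ))
    (hgb : ∀ x, |g τ x| ≤ β)
    (hn : ∀ i, ‖u τ i‖ = 1) :
    ∑' i : ℤ, g τ (((i:ℝ) + 1) * h) * DD g h u τ i = 0 := by
  have hβ0 : 0 ≤ β := le_trans (abs_nonneg _) (hgb 0)
  set V : ℤ → E3 := fun i => Dp h (u τ) i with hV
  set Rr : ℤ → E3 := fun i => rhsD g h (u τ) τ i with hRr
  set cw : ℤ → ℝ := fun i => g τ (((i:ℝ) + 1) * h) with hcw
  set P : ℤ → ℝ := fun i => dotE (cw i • V i) (Rr (i+1)) with hP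
  set Q : ℤ → ℝ := fun i => dotE (cw i • V i) (Rr i) with hQ
  -- termwise rewriting
  have hterm : ∀ i, cw i * DD g h u τ i = (2/h) * (P i - Q i) := by
    intro i
    have hDDi : DD g h u τ i
        = 2 * dotE (V i) (h⁻¹ • (Rr (i+1) - Rr i)) := rfl
    rw [hDDi]
    simp only [hP, hQ, dotE, real_inner_smul_left, real_inner_smul_right, inner_sub_right]
    field_simp
  -- summability of P and Q
  have hnormR : ∀ i, ‖Rr i‖ ≤ β / h * (‖V i‖ + ‖V (i-1)‖) := fun i =>
    normR_le hh (u τ) hn hgb i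
  have habsP : ∀ i, |P i| ≤ β^2/h * (2 * AA h u τ i + AA h u τ (i+1)) := by
    intro i
    have h1 : |P i| ≤ ‖cw i • V i‖ * ‖Rr (i+1)‖ := abs_real_inner_le_norm _ _
    have h2 : ‖cw i • V i‖ ≤ β * ‖V i‖ := by
      rw [norm_smul, Real.norm_eq_abs]
      exact mul_le_mul_of_nonneg_right (hgb _) (norm_nonneg _)
    have h3 := hnormR (i+1)
    have hsimp : (i+1-1 : ℤ) = i := by ring
    rw [hsimp] at h3
    have hA1 : AA h u τ i = ‖V i‖^2 := rfl
    have hA2 : AA h u τ (i+1) = ‖V (i+1)‖^2 := rfl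
    rw [hA1, hA2]
    have hq2 : (0:ℝ) ≤ β^2/h := div_nonneg (sq_nonneg β) hh.le
    calc |P i| ≤ ‖cw i • V i‖ * ‖Rr (i+1)‖ := h1
      _ ≤ (β * ‖V i‖) * (β / h * (‖V (i+1)‖ + ‖V i‖)) :=
          mul_le_mul h2 h3 (norm_nonneg _) (mul_nonneg hβ0 (norm_nonneg _))
      _ = β^2/h * (‖V i‖ * (‖V (i+1)‖ + ‖V i‖)) := by ring
      _ ≤ β^2/h * (2 * ‖V i‖^2 + ‖V (i+1)‖^2) := by
          refine mul_le_mul_of_nonneg_left ?_ hq2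
          nlinarith [sq_nonneg (‖V i‖ - ‖V (i+1)‖)]
  have habsQ : ∀ i, |Q i| ≤ β^2/h * (2 * AA h u τ i + AA h u τ (i-1)) := by
    intro i
    have h1 : |Q i| ≤ ‖cw i • V i‖ * ‖Rr i‖ := abs_real_inner_le_norm _ _
    have h2 : ‖cw i • V i‖ ≤ β * ‖V i‖ := by
      rw [norm_smul, Real.norm_eq_abs]
      exact mul_le_mul_of_nonneg_right (hgb _) (norm_nonneg _)
    have h3 := hnormR i
    have hA1 : AA h u τ i = ‖V i‖^2 := rfl
    have hA2 : AA h u τ (i-1) = ‖V (i-1)‖^2 := rfl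
    rw [hA1, hA2]
    have hq2 : (0:ℝ) ≤ β^2/h := div_nonneg (sq_nonneg β) hh.le
    calc |Q i| ≤ ‖cw i • V i‖ * ‖Rr i‖ := h1
      _ ≤ (β * ‖V i‖) * (β / h * (‖V i‖ + ‖V (i-1)‖)) :=
          mul_le_mul h2 h3 (norm_nonneg _) (mul_nonneg hβ0 (norm_nonneg _))
      _ = β^2/h * (‖V i‖ * (‖V i‖ + ‖V (i-1)‖)) := by ring
      _ ≤ β^2/h * (2 * ‖V i‖^2 + ‖V (i-1)‖^2) := by
          refine mul_le_mul_of_nonneg_left ?_ hq2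
          nlinarith [sq_nonneg (‖V i‖ - ‖V (i-1)‖)]
  have hsumMP : Summable (fun i => β^2/h * (2 * AA h u τ i + AA h u τ (i+1))) :=
    ((hA.mul_left 2).add (summable_AA_add τ hA)).mul_left _
  have hsumMQ : Summable (fun i => β^2/h * (2 * AA h u τ i + AA h u τ (i-1))) :=
    ((hA.mul_left 2).add (summable_AA_sub τ hA)).mul_left _
  have hsumP : Summable P := summable_of_abs
    (Summable.of_nonneg_of_le (fun i => abs_nonneg _) habsP hsumMP)
  have hsumQ : Summable Q := summable_of_abs
    (Summable.of_nonneg_of_le (fun i => abs_nonneg _) habsQ hsumMQ)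
  have hsumP' : Summable (fun i => P (i - 1)) := by
    simpa [sub_eq_add_neg] using summable_shift hsumP (-1)
  -- per-term vanishing of the shifted difference
  have hzero : ∀ i : ℤ, P (i - 1) - Q i = 0 := by
    intro i
    have hcast : ((i - 1 : ℤ) : ℝ) + 1 = (i : ℝ) := by push_cast; ring
    have hcwm : cw (i - 1) = g τ ((i:ℝ) * h) := by rw [hcw]; simp only; rw [hcast]
    set X : E3 := h⁻¹ • (cw i • V i - g τ ((i:ℝ) * h) • V (i - 1)) with hX
    have hRi : Rr i = cross (u τ i) X := by
      rw [hRr]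
      simp only
      rw [rhsD_eq]
    have hvec : cw (i-1) • V (i-1) - cw i • V i = (-h) • X := by
      rw [hcwm, hX, smul_smul]
      rw [show (-h) * h⁻¹ = -1 by field_simp]
      rw [neg_one_smul, neg_sub]
    have hPQ : P (i-1) - Q i = dotE (cw (i-1) • V (i-1) - cw i • V i) (Rr i) := by
      have hsimp : (i - 1 + 1 : ℤ) = i := by ring
      simp only [hP, hQ, hsimp, dotE, inner_sub_left]
    rw [hPQ, hvec, hRi]
    show dotE ((-h) • X) (cross (u τ i) X) = 0
    unfold dotE
    rw [real_inner_smul_left]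
    have := dotE_cross_right (u τ i) X
    unfold dotE at this
    rw [this, mul_zero]
  -- assemble
  calc ∑' i : ℤ, g τ (((i:ℝ) + 1) * h) * DD g h u τ i
      = ∑' i, (2/h) * (P i - Q i) := tsum_congr hterm
    _ = (2/h) * ∑' i, (P i - Q i) := tsum_mul_left
    _ = (2/h) * ((∑' i, P i) - ∑' i, Q i) := by rw [Summable.tsum_sub hsumP hsumQ]
    _ = (2/h) * ((∑' i, P (i - 1)) - ∑' i, Q i) := by
        congr 2
        rw [show (fun i => P (i - 1)) = fun i => P (i + (-1)) by funext i; ring_nf]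
        exact (tsum_shift P (-1)).symm
    _ = (2/h) * (∑' i, (P (i - 1) - Q i)) := by rw [Summable.tsum_sub hsumP' hsumQ]
    _ = 0 := by
        rw [tsum_congr hzero]
        simp

end Main

/-- A priori bound for the semi-discrete system: any `C¹` solution
with unit-norm values and `D⁺u(t) ∈ L²ₕ` satisfies
`|D⁺u(t)|ₕ ≤ √(β/α) |D⁺u⁰|ₕ exp(β₁ t/(2α))` for all `t ≥ 0`. -/
theorem statement16 (h : ℝ) (hh : 0 < h)
    (u₀ : ℤ → E3) (hs : ∀ i, ‖u₀ i‖ = 1) (hd : Summable fun i : ℤ => ‖Dp h u₀ i‖ ^ 2)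
    (g : ℝ → ℝ → ℝ) (α β β₁ : ℝ) (hα : 0 < α)
    (hgl : ∀ t x, 0 ≤ t → α ≤ g t x) (hgu : ∀ t x, 0 ≤ t → g t x ≤ β)
    (hglip : ∀ t s x, 0 ≤ t → 0 ≤ s → |g t x - g s x| ≤ β₁ * |t - s|)
    (u : ℝ → ℤ → E3) (hu0 : ∀ i, u 0 i = u₀ i)
    (hode : ∀ t ∈ Ici (0:ℝ), ∀ i,
      HasDerivWithinAt (fun s => u s i) (rhsD g h (u t) t i) (Ici 0) t)
    (hcont : ∀ i, ContinuousOn (fun t => rhsD g h (u t) t i) (Ici 0))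
    (hnorm : ∀ t ∈ Ici (0:ℝ), ∀ i, ‖u t i‖ = 1)
    (hsum : ∀ t ∈ Ici (0:ℝ), Summable fun i : ℤ => ‖Dp h (u t) i‖ ^ 2) :
    ∀ t ∈ Ici (0:ℝ),
      normh h (Dp h (u t)) ≤
        Real.sqrt (β / α) * normh h (Dp h u₀) * Real.exp (β₁ * t / (2 * α)) := by
  intro t₀ ht₀
  have ht₀' : (0:ℝ) ≤ t₀ := ht₀
  have hβα : α ≤ β := le_trans (hgl 0 0 le_rfl) (hgu 0 0 le_rfl)
  have hβpos : 0 < β := lt_of_lt_of_le hα hβα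
  have hβ₁0 : 0 ≤ β₁ := by
    have h1 := hglip 1 0 0 zero_le_one le_rfl
    have h2 : (0:ℝ) ≤ |g 1 0 - g 0 0| := abs_nonneg _
    simpa using h2.trans h1
  have hgb : ∀ t x, 0 ≤ t → |g t x| ≤ β := fun t x ht =>
    abs_le.mpr ⟨by linarith [hgl t x ht], hgu t x ht⟩
  have hsumA : ∀ t, 0 ≤ t → Summable (AA h u t) := fun t ht => hsum t ht
  have hnorm' : ∀ t, 0 ≤ t → ∀ i, ‖u t i‖ = 1 := fun t ht => hnorm t ht
  set K : ℝ := 8 * β / h^2 with hK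
  have hK0 : 0 < K := by rw [hK]; positivity
  set D₀ : ℝ := 16 * β / h^4 with hD₀
  have hD₀0 : 0 ≤ D₀ := by rw [hD₀]; positivity
  set BT : ℝ := gronwallBound (SS h u 0) K D₀ t₀ with hBT
  have hph1 : ∀ τ, τ ∈ Icc (0:ℝ) t₀ → SS h u τ ≤ BT := by
    intro τ hτ
    have h1 := phase1 hh hode hnorm hgb (fun t ht => hsumA t ht) ht₀' τ hτ
    exact h1.trans (gronwallBound_mono' (SS_nonneg 0) hK0 hD₀0 hτ.2)
  have hBT0 : 0 ≤ BT := le_trans (SS_nonneg 0) (hph1 0 ⟨le_rfl, ht₀'⟩)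
  have hcb : ∀ τ, 0 ≤ τ → ∀ i : ℤ, |g τ (((i:ℝ)+1)*h)| ≤ β := fun τ hτ i => hgb _ _ hτ
  have hDDb : ∀ τ, τ ∈ Icc (0:ℝ) t₀ → (∑' i, |DD g h u τ i|) ≤ K * BT := by
    intro τ hτ
    have h1 := tsum_absDD_le hh (hnorm' τ hτ.1) (fun x => hgb τ x hτ.1) (hsumA τ hτ.1)
    refine h1.trans ?_
    rw [hK]
    exact mul_le_mul_of_nonneg_left (hph1 τ hτ) (by positivity)
  set CT : ℝ := β₁ * (K * BT) with hCT
  have hCT0 : 0 ≤ CT := by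
    rw [hCT]; exact mul_nonneg hβ₁0 (mul_nonneg hK0.le hBT0)
  -- KEY two-point inequality
  have key : ∀ s t : ℝ, 0 ≤ s → s ≤ t → t ≤ t₀ →
      FF g h u t - FF g h u s ≤ (β₁/α) * (t - s) * FF g h u t + CT * (t-s)^2 ∧
      |FF g h u t - FF g h u s| ≤ (β₁ * BT + CT * t₀) * (t - s) := by
    intro s t hs0 hst htt₀
    have ht0 : 0 ≤ t := hs0.trans hst
    have hts : 0 ≤ t - s := sub_nonneg.2 hst
    have hsubIcc : Icc s t ⊆ Icc 0 t₀ := fun x hx => ⟨hs0.trans hx.1, hx.2.trans htt₀⟩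
    have hAs := hsumA s hs0
    have hAt := hsumA t ht0
    have hsum1 : Summable fun i : ℤ => g t (((i:ℝ)+1)*h) * AA h u t i :=
      summable_weight hAt (AA_nonneg t) (hcb t ht0)
    have hsum2 : Summable fun i : ℤ => g s (((i:ℝ)+1)*h) * AA h u s i :=
      summable_weight hAs (AA_nonneg s) (hcb s hs0)
    have hsum3 : Summable fun i : ℤ =>
        (g t (((i:ℝ)+1)*h) - g s (((i:ℝ)+1)*h)) * AA h u t i := by
      apply summable_weight hAt (AA_nonneg t) (β := 2*β)
      intro i
      have h1 := abs_add_le (g t (((i:ℝ)+1)*h)) (-(g s (((i:ℝ)+1)*h)))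
      rw [← sub_eq_add_neg, abs_neg] at h1
      have h2 := add_le_add (hcb t ht0 i) (hcb s hs0 i)
      linarith
    have hsum4 : Summable fun i : ℤ => g s (((i:ℝ)+1)*h) * (AA h u t i - AA h u s i) := by
      have h1 := (summable_weight hAt (AA_nonneg t) (hcb s hs0)).sub
        (summable_weight hAs (AA_nonneg s) (hcb s hs0))
      exact h1.congr fun i => by ring
    have hdecomp : FF g h u t - FF g h u s
        = (∑' i : ℤ, (g t (((i:ℝ)+1)*h) - g s (((i:ℝ)+1)*h)) * AA h u t i)
          + ∑' i : ℤ, g s (((i:ℝ)+1)*h) * (AA h u t i - AA h u s i) := by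
      unfold FF
      rw [← Summable.tsum_sub hsum1 hsum2, ← Summable.tsum_add hsum3 hsum4]
      exact tsum_congr fun i => by ring
    -- first term
    have hptabs : ∀ i : ℤ, |(g t (((i:ℝ)+1)*h) - g s (((i:ℝ)+1)*h)) * AA h u t i|
        ≤ (β₁ * (t - s)) * AA h u t i := by
      intro i
      rw [abs_mul, abs_of_nonneg (AA_nonneg t i)]
      refine mul_le_mul_of_nonneg_right ?_ (AA_nonneg t i)
      have h1 := hglip t s (((i:ℝ)+1)*h) ht0 hs0
      rwa [abs_of_nonneg (sub_nonneg.2 hst)] at h1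
    have habs3 : Summable fun i : ℤ =>
        |(g t (((i:ℝ)+1)*h) - g s (((i:ℝ)+1)*h)) * AA h u t i| :=
      Summable.of_nonneg_of_le (fun i => abs_nonneg _) hptabs (hAt.mul_left _)
    have hT1abs : |∑' i : ℤ, (g t (((i:ℝ)+1)*h) - g s (((i:ℝ)+1)*h)) * AA h u t i|
        ≤ β₁ * (t-s) * SS h u t := by
      refine (abs_tsum_le habs3).trans ?_
      have h1 := Summable.tsum_le_tsum hptabs habs3 (hAt.mul_left _)
      rwa [tsum_mul_left] at h1
    have hT1le := (le_abs_self _).trans hT1abs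
    -- second term via interchange
    have hT2eq : (∑' i : ℤ, g s (((i:ℝ)+1)*h) * (AA h u t i - AA h u s i))
        = ∫ τ in s..t, ∑' i : ℤ, g s (((i:ℝ)+1)*h) * DD g h u τ i := by
      apply interchange hst
      · exact fun i => FTC hode hcont hs0 hst i
      · exact fun i => (contOn_DD hode hcont i).mono (fun x hx => hs0.trans hx.1)
      · exact fun τ i => AA_nonneg τ i
      · exact hAs
      · exact hAt
      · exact fun τ hτ => summable_absDD hh (hnorm' τ (hs0.trans hτ.1))
          (fun x => hgb τ x (hs0.trans hτ.1)) (hsumA τ (hs0.trans hτ.1))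
      · exact fun τ hτ => hDDb τ (hsubIcc hτ)
      · exact hβpos.le
      · exact hcb s hs0
    -- bound on the integrand
    have hGb : ∀ τ ∈ Set.uIoc s t, ‖∑' i : ℤ, g s (((i:ℝ)+1)*h) * DD g h u τ i‖
        ≤ β₁ * (t - s) * (K * BT) := by
      intro τ hτ
      rw [uIoc_of_le hst] at hτ
      have hτIcc : τ ∈ Icc s t := Ioc_subset_Icc_self hτ
      have hτ0 : 0 ≤ τ := hs0.trans hτIcc.1
      have hτIcc0 : τ ∈ Icc (0:ℝ) t₀ := hsubIcc hτIcc
      have hADD := summable_absDD hh (hnorm' τ hτ0) (fun x => hgb τ x hτ0) (hsumA τ hτ0)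
      have hCA := claimA hh hτ0 (hsumA τ hτ0) (fun x => hgb τ x hτ0) (hnorm' τ hτ0)
      have hsum_s : Summable fun i : ℤ => g s (((i:ℝ)+1)*h) * DD g h u τ i := by
        apply summable_of_abs
        apply Summable.of_nonneg_of_le (fun i => abs_nonneg _) (fun i => ?_) (hADD.mul_left β)
        rw [abs_mul]; exact mul_le_mul_of_nonneg_right (hcb s hs0 i) (abs_nonneg _)
      have hsum_τ : Summable fun i : ℤ => g τ (((i:ℝ)+1)*h) * DD g h u τ i := by
        apply summable_of_abs
        apply Summable.of_nonneg_of_le (fun i => abs_nonneg _) (fun i => ?_) (hADD.mul_left β)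
        rw [abs_mul]; exact mul_le_mul_of_nonneg_right (hcb τ hτ0 i) (abs_nonneg _)
      have hsplit : (∑' i : ℤ, g s (((i:ℝ)+1)*h) * DD g h u τ i)
          = ∑' i : ℤ, (g s (((i:ℝ)+1)*h) - g τ (((i:ℝ)+1)*h)) * DD g h u τ i := by
        rw [← sub_zero (∑' i : ℤ, g s (((i:ℝ)+1)*h) * DD g h u τ i), ← hCA,
          ← Summable.tsum_sub hsum_s hsum_τ]
        exact tsum_congr fun i => by ring
      rw [Real.norm_eq_abs, hsplit]
      have hpt : ∀ i : ℤ, |(g s (((i:ℝ)+1)*h) - g τ (((i:ℝ)+1)*h)) * DD g h u τ i|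
          ≤ (β₁ * (t - s)) * |DD g h u τ i| := by
        intro i
        rw [abs_mul]
        refine mul_le_mul ?_ le_rfl (abs_nonneg _) (mul_nonneg hβ₁0 hts)
        have h1 := hglip s τ (((i:ℝ)+1)*h) hs0 hτ0
        refine h1.trans ?_
        have h2 : |s - τ| ≤ t - s := by
          rw [abs_sub_comm, abs_of_nonneg (sub_nonneg.2 hτIcc.1)]
          linarith [hτIcc.2]
        exact mul_le_mul_of_nonneg_left h2 hβ₁0
      have habsd : Summable fun i : ℤ =>
          |(g s (((i:ℝ)+1)*h) - g τ (((i:ℝ)+1)*h)) * DD g h u τ i| :=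
        Summable.of_nonneg_of_le (fun i => abs_nonneg _) hpt (hADD.mul_left _)
      refine (abs_tsum_le habsd).trans ?_
      have h2 := Summable.tsum_le_tsum hpt habsd (hADD.mul_left _)
      rw [tsum_mul_left] at h2
      refine h2.trans ?_
      have h3 := hDDb τ hτIcc0
      exact mul_le_mul_of_nonneg_left h3 (mul_nonneg hβ₁0 hts)
    have hT2abs : |∫ τ in s..t, ∑' i : ℤ, g s (((i:ℝ)+1)*h) * DD g h u τ i|
        ≤ (β₁ * (t - s) * (K * BT)) * (t - s) := by
      have h1 := intervalIntegral.norm_integral_le_of_norm_le_const hGb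
      rw [Real.norm_eq_abs] at h1
      rwa [abs_of_nonneg hts] at h1
    constructor
    · rw [hdecomp, hT2eq]
      have hαS : α * SS h u t ≤ FF g h u t := by
        have h1 := Summable.tsum_le_tsum
          (fun i : ℤ => mul_le_mul_of_nonneg_right (hgl t (((i:ℝ)+1)*h) ht0) (AA_nonneg t i))
          (hAt.mul_left α) hsum1
        rwa [tsum_mul_left] at h1
      have hSF : β₁ * (t-s) * SS h u t ≤ (β₁/α) * (t - s) * FF g h u t := by
        have h4 : β₁ * (t-s) * SS h u t = (β₁ * (t-s) / α) * (α * SS h u t) := by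
          field_simp
        have h5 : (β₁/α) * (t - s) * FF g h u t = (β₁ * (t-s) / α) * FF g h u t := by ring
        rw [h4, h5]
        exact mul_le_mul_of_nonneg_left hαS (div_nonneg (mul_nonneg hβ₁0 hts) hα.le)
      have hIle := (le_abs_self _).trans hT2abs
      have hCTeq : CT * (t-s)^2 = (β₁ * (t-s) * (K*BT)) * (t-s) := by rw [hCT]; ring
      linarith
    · rw [hdecomp, hT2eq]
      have hSb : SS h u t ≤ BT := hph1 t ⟨ht0, htt₀⟩
      have htst : t - s ≤ t₀ := by linarith
      calc |(∑' i : ℤ, (g t (((i:ℝ)+1)*h) - g s (((i:ℝ)+1)*h)) * AA h u t i)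
            + ∫ τ in s..t, ∑' i : ℤ, g s (((i:ℝ)+1)*h) * DD g h u τ i|
          ≤ |∑' i : ℤ, (g t (((i:ℝ)+1)*h) - g s (((i:ℝ)+1)*h)) * AA h u t i|
            + |∫ τ in s..t, ∑' i : ℤ, g s (((i:ℝ)+1)*h) * DD g h u τ i| := abs_add_le _ _
        _ ≤ β₁*(t-s)*SS h u t + (β₁*(t-s)*(K*BT))*(t-s) := add_le_add hT1abs hT2abs
        _ ≤ (β₁ * BT + CT * t₀) * (t - s) := by
            rw [hCT]
            nlinarith [mul_nonneg (mul_nonneg hβ₁0 hts) (sub_nonneg.2 hSb),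
              mul_nonneg (mul_nonneg (mul_nonneg (mul_nonneg hβ₁0 hK0.le) hBT0) hts)
                (sub_nonneg.2 htst)]
  -- Lipschitz continuity of FF on [0,t₀]
  set L : ℝ := β₁ * BT + CT * t₀ with hL
  have hL0 : 0 ≤ L := by
    rw [hL]; exact add_nonneg (mul_nonneg hβ₁0 hBT0) (mul_nonneg hCT0 ht₀')
  have hFlipOn : ∀ x ∈ Icc (0:ℝ) t₀, ∀ y ∈ Icc (0:ℝ) t₀,
      |FF g h u y - FF g h u x| ≤ L * |y - x| := by
    intro x hx y hy
    rcases le_total x y with hxy | hxy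
    · have h1 := (key x y hx.1 hxy hy.2).2
      rwa [abs_of_nonneg (sub_nonneg.2 hxy)]
    · have h1 := (key y x hy.1 hxy hx.2).2
      have he : |y - x| = x - y := by
        rw [abs_of_nonpos (by linarith)]; ring
      rw [abs_sub_comm, he]
      exact h1
  have hFcont : ContinuousOn (FF g h u) (Icc 0 t₀) := by
    have hlip : LipschitzOnWith (Real.toNNReal L) (FF g h u) (Icc 0 t₀) := by
      apply LipschitzOnWith.of_dist_le_mul
      intro x hx y hy
      calc dist (FF g h u x) (FF g h u y) = |FF g h u y - FF g h u x| := by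
            rw [Real.dist_eq, abs_sub_comm]
        _ ≤ L * |y - x| := hFlipOn x hx y hy
        _ = (Real.toNNReal L : ℝ) * dist x y := by
            rw [Real.dist_eq, Real.coe_toNNReal L hL0, abs_sub_comm]
    exact hlip.continuousOn
  -- Gronwall for FF
  have hslope : ∀ x ∈ Ico (0:ℝ) t₀, ∀ r, (β₁/α) * FF g h u x < r →
      ∃ᶠ z in 𝓝[>] x, (z - x)⁻¹ * (FF g h u z - FF g h u x) < r := by
    intro x hx r hr
    have hx0 : (0:ℝ) ≤ x := hx.1
    have hxt : x < t₀ := hx.2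
    have hmem : Ioc x t₀ ∈ 𝓝[>] x := Ioc_mem_nhdsGT hxt
    have hFt : Tendsto (FF g h u) (𝓝[>] x) (𝓝 (FF g h u x)) := by
      have h1 : ContinuousWithinAt (FF g h u) (Icc 0 t₀) x := hFcont x ⟨hx0, hxt.le⟩
      have h2 : ContinuousWithinAt (FF g h u) (Ioc x t₀) x :=
        h1.mono (fun z hz => ⟨hx0.trans hz.1.le, hz.2⟩)
      rwa [ContinuousWithinAt, nhdsWithin_Ioc_eq_nhdsGT hxt] at h2
    have hlin : Tendsto (fun z : ℝ => (β₁/α) * FF g h u z + CT * (z - x)) (𝓝[>] x)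
        (𝓝 ((β₁/α) * FF g h u x + CT * 0)) := by
      apply Tendsto.add
      · exact hFt.const_mul _
      · have h3 : Tendsto (fun z : ℝ => CT * (z - x)) (𝓝 x) (𝓝 (CT * (x - x))) :=
          (continuous_const.mul (continuous_id.sub continuous_const)).tendsto x
        rw [sub_self, mul_zero] at h3
        have h4 : (CT : ℝ) * 0 = 0 := mul_zero _
        rw [h4]
        exact h3.mono_left nhdsWithin_le_nhds
    have hev := hlin.eventually_lt_const (by simpa using hr)
    apply Filter.Eventually.frequently
    filter_upwards [hev, hmem] with z h1 h2
    have hz : x < z := h2.1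
    have hk := (key x z hx0 hz.le h2.2).1
    have hzx : 0 < z - x := sub_pos.2 hz
    have hle : (z - x)⁻¹ * (FF g h u z - FF g h u x)
        ≤ (β₁/α) * FF g h u z + CT * (z - x) := by
      rw [inv_mul_le_iff₀ hzx]
      calc FF g h u z - FF g h u x ≤ (β₁/α)*(z-x)*FF g h u z + CT*(z-x)^2 := hk
        _ = (z-x) * ((β₁/α) * FF g h u z + CT * (z - x)) := by ring
    exact lt_of_le_of_lt hle h1
  have hgron := le_gronwallBound_of_liminf_deriv_right_le hFcont hslope le_rfl
    (fun x _ => le_of_eq (add_zero _).symm)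
  have hFt₀ : FF g h u t₀ ≤ FF g h u 0 * Real.exp ((β₁/α) * t₀) := by
    have h1 := hgron t₀ ⟨ht₀', le_rfl⟩
    rwa [sub_zero, gronwallBound_ε0] at h1
  -- endpoint comparisons and conclusion
  have hαS : α * SS h u t₀ ≤ FF g h u t₀ := by
    have hsum1 := summable_weight (hsumA t₀ ht₀') (AA_nonneg t₀) (hcb t₀ ht₀')
    have h1 := Summable.tsum_le_tsum
      (fun i : ℤ => mul_le_mul_of_nonneg_right (hgl t₀ (((i:ℝ)+1)*h) ht₀') (AA_nonneg t₀ i))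
      ((hsumA t₀ ht₀').mul_left α) hsum1
    rwa [tsum_mul_left] at h1
  have hFβ : FF g h u 0 ≤ β * SS h u 0 := by
    have hsum2 := summable_weight (hsumA 0 le_rfl) (AA_nonneg 0) (hcb 0 le_rfl)
    have h1 := Summable.tsum_le_tsum
      (fun i : ℤ => mul_le_mul_of_nonneg_right (hgu 0 (((i:ℝ)+1)*h) le_rfl) (AA_nonneg 0 i))
      hsum2 ((hsumA 0 le_rfl).mul_left β)
    rwa [tsum_mul_left] at h1
  have hu0' : u 0 = u₀ := funext hu0
  have hSS0 : SS h u 0 = ∑' i : ℤ, ‖Dp h u₀ i‖^2 := by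
    unfold SS AA
    rw [hu0']
  set e : ℝ := Real.exp (β₁ * t₀ / α) with he
  have he0 : (0:ℝ) ≤ e := Real.exp_nonneg _
  have hexp_eq : Real.exp ((β₁/α) * t₀) = e := by rw [he]; congr 1; ring
  have hchain : α * SS h u t₀ ≤ β * SS h u 0 * e := by
    refine hαS.trans (hFt₀.trans ?_)
    rw [hexp_eq]
    exact mul_le_mul_of_nonneg_right hFβ he0
  have hS0' : 0 ≤ SS h u 0 := SS_nonneg 0
  have hnormh_t : normh h (Dp h (u t₀)) = Real.sqrt (h * SS h u t₀) := rfl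
  have hnormh_0 : normh h (Dp h u₀) = Real.sqrt (h * SS h u 0) := by rw [normh, hSS0]
  rw [hnormh_t, hnormh_0]
  have hbound : h * SS h u t₀ ≤ (β/α) * ((h * SS h u 0) * e) := by
    have h5 : SS h u t₀ ≤ β * SS h u 0 * e / α :=
      (le_div_iff₀ hα).mpr (by linarith [hchain])
    calc h * SS h u t₀ ≤ h * (β * SS h u 0 * e / α) := mul_le_mul_of_nonneg_left h5 hh.le
      _ = (β/α) * ((h * SS h u 0) * e) := by field_simp
  have hsq := Real.sqrt_le_sqrt hbound
  refine hsq.trans (le_of_eq ?_)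
  rw [Real.sqrt_mul (by positivity : (0:ℝ) ≤ β/α),
    Real.sqrt_mul (mul_nonneg hh.le hS0')]
  have hse : Real.sqrt e = Real.exp (β₁ * t₀ / (2*α)) := by
    rw [he, ← Real.exp_half]
    congr 1
    ring
  rw [hse]
  ring
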